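/- The standard normal cumulative distribution function Φ is log-concave on ℝ, i.e., the function t ↦ log Φ(t) is concave. -/
import Mathlib

open MeasureTheory Real Set Filter

noncomputable def phi (t : ℝ) : ℝ := (Real.sqrt (2 * Real.pi))⁻¹ * Real.exp (-t ^ 2 / 2)

noncomputable def Phi (t : ℝ) : ℝ := ∫ u in Set.Iic t, phi u

noncomputable def millsR (t : ℝ) : ℝ := phi t / Phi t

lemma phi_pos (t : ℝ) : 0 < phi t := by
  have : 0 < Real.sqrt (2 * Real.pi) := Real.sqrt_pos.2 (by positivity)
  exact mul_pos (inv_pos.2 this) (Real.exp_pos _)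

lemma continuous_phi : Continuous phi := by
  unfold phi; fun_prop

lemma integrable_phi : Integrable phi := by
  have h := (integrable_exp_neg_mul_sq (b := (1/2 : ℝ)) (by norm_num)).const_mul
    (Real.sqrt (2 * Real.pi))⁻¹
  have : phi = fun x : ℝ => (Real.sqrt (2 * Real.pi))⁻¹ * Real.exp (-(1/2) * x ^ 2) := by
    funext x; unfold phi; congr 1; ring_nf
  rw [this]; exact h

lemma integrable_mul_phi : Integrable (fun u : ℝ => u * phi u) := by
  have h := (integrable_mul_exp_neg_mul_sq (b := (1/2 : ℝ)) (by norm_num)).const_mul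
    (Real.sqrt (2 * Real.pi))⁻¹
  have : (fun u : ℝ => u * phi u)
      = fun x : ℝ => (Real.sqrt (2 * Real.pi))⁻¹ * (x * Real.exp (-(1/2) * x ^ 2)) := by
    funext x; unfold phi; rw [show (-(1/2) * x ^ 2 : ℝ) = -x ^ 2 / 2 by ring]; ring
  rw [this]; exact h

lemma hasDerivAt_phi (t : ℝ) : HasDerivAt phi (-t * phi t) t := by
  have h1 : HasDerivAt (fun u : ℝ => -u ^ 2 / 2) (-t) t := by
    have := ((hasDerivAt_pow 2 t).neg).div_const 2
    exact this.congr_deriv (show -(2 * t ^ (2-1) : ℝ) / 2 = -t by ring)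
  have h2 := (h1.exp).const_mul (Real.sqrt (2 * Real.pi))⁻¹
  refine h2.congr_deriv ?_
  unfold phi; ring

lemma hasDerivAt_Phi (t : ℝ) : HasDerivAt Phi (phi t) t := by
  have key : ∀ s : ℝ, Phi s = Phi 0 + ∫ u in (0:ℝ)..s, phi u := by
    intro s
    have := intervalIntegral.integral_Iic_sub_Iic (f := phi) (μ := volume)
      integrable_phi.integrableOn integrable_phi.integrableOn (a := 0) (b := s)
    unfold Phi; linarith [this]
  have h : HasDerivAt (fun s : ℝ => Phi 0 + ∫ u in (0:ℝ)..s, phi u) (phi t) t := by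
    refine HasDerivAt.const_add _ ?_
    exact intervalIntegral.integral_hasDerivAt_right
      (integrable_phi.intervalIntegrable)
      (continuous_phi.stronglyMeasurableAtFilter _ _)
      continuous_phi.continuousAt
  have heq : (fun s : ℝ => Phi 0 + ∫ u in (0:ℝ)..s, phi u) = Phi := by
    funext s; exact (key s).symm
  rw [heq] at h; exact h

lemma Phi_pos (t : ℝ) : 0 < Phi t := by
  unfold Phi
  rw [MeasureTheory.setIntegral_pos_iff_support_of_nonneg_ae
    (Filter.Eventually.of_forall fun u => (phi_pos u).le) integrable_phi.integrableOn]
  have : Function.support phi = Set.univ := by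
    ext u; simp [Function.mem_support, (phi_pos u).ne']
  rw [this, Set.univ_inter]
  simp [Real.volume_Iic]

lemma integral_mul_phi_Iic (t : ℝ) : (∫ u in Set.Iic t, u * phi u) = -phi t := by
  have hderiv : ∀ x ∈ Set.Iio t, HasDerivAt (fun u => -phi u) (x * phi x) x := by
    intro x _
    exact (hasDerivAt_phi x).neg.congr_deriv (show -(-x * phi x) = x * phi x by ring)
  have htend : Tendsto (fun u => -phi u) atBot (nhds 0) := by
    have h1 : Tendsto (fun u : ℝ => -u ^ 2 / 2) atBot atBot := by
      have hsq : Tendsto (fun u : ℝ => u ^ 2) atBot atTop := by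
        have ha : Tendsto (fun x : ℝ => x ^ 2) atTop atTop :=
          tendsto_pow_atTop two_ne_zero
        have hb : Tendsto (fun x : ℝ => -x) atBot atTop := tendsto_neg_atBot_atTop
        have hc := ha.comp hb
        have heq : ((fun x : ℝ => x ^ 2) ∘ fun x : ℝ => -x) = fun u : ℝ => u ^ 2 := by
          funext u; simp [Function.comp]
        rwa [heq] at hc
      have hn : Tendsto (fun x : ℝ => -x) atTop atBot := tendsto_neg_atTop_atBot
      have hc := hn.comp hsq
      exact (hc.atBot_div_const (by norm_num : (0:ℝ) < 2))
    have h2 : Tendsto (fun u : ℝ => phi u) atBot (nhds 0) := by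
      have := (Real.tendsto_exp_atBot.comp h1).const_mul (Real.sqrt (2 * Real.pi))⁻¹
      simpa [phi, Function.comp] using this
    simpa using h2.neg
  have := MeasureTheory.integral_Iic_of_hasDerivAt_of_tendsto
    (continuous_phi.neg.continuousWithinAt) hderiv integrable_mul_phi.integrableOn htend
  simpa using this

lemma mills_key (t : ℝ) : 0 ≤ t * Phi t + phi t := by
  rcases le_or_gt 0 t with ht | ht
  · have := Phi_pos t
    have := phi_pos t
    nlinarith
  · -- t < 0 : show Phi t ≤ t⁻¹ * (-phi t)
    have hmono : Phi t ≤ ∫ u in Set.Iic t, (u / t) * phi u := by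
      refine MeasureTheory.setIntegral_mono_on integrable_phi.integrableOn ?_
        measurableSet_Iic ?_
      · have : (fun u : ℝ => (u / t) * phi u) = fun u => t⁻¹ * (u * phi u) := by
          funext u; ring
        rw [this]
        exact (integrable_mul_phi.const_mul _).integrableOn
      · intro u hu
        have h1 : (1:ℝ) ≤ u / t := by
          rw [le_div_iff_of_neg ht]; simpa using hu
        exact le_mul_of_one_le_left (phi_pos u).le h1
    have heq : (∫ u in Set.Iic t, (u / t) * phi u) = t⁻¹ * (-phi t) := by
      have : (fun u : ℝ => (u / t) * phi u) = fun u => t⁻¹ * (u * phi u) := by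
        funext u; ring
      rw [this, MeasureTheory.integral_const_mul, integral_mul_phi_Iic]
    rw [heq] at hmono
    have h2 := mul_le_mul_of_nonpos_left hmono ht.le
    rw [← mul_assoc, mul_inv_cancel₀ ht.ne, one_mul] at h2
    linarith

lemma hasDerivAt_logPhi (t : ℝ) :
    HasDerivAt (fun s => Real.log (Phi s)) (phi t / Phi t) t :=
  (hasDerivAt_Phi t).log (Phi_pos t).ne'

lemma deriv_logPhi : deriv (fun s => Real.log (Phi s)) = fun t => phi t / Phi t := by
  funext t; exact (hasDerivAt_logPhi t).deriv

lemma hasDerivAt_mills (t : ℝ) :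
    HasDerivAt (fun s => phi s / Phi s)
      ((-t * phi t * Phi t - phi t * phi t) / Phi t ^ 2) t := by
  have h := (hasDerivAt_phi t).div (hasDerivAt_Phi t) (Phi_pos t).ne'
  exact h.congr_deriv (show (-t * phi t * Phi t - phi t * phi t) / Phi t ^ 2 = _ by ring)

/-- The standard normal CDF is log-concave on `ℝ`. -/
theorem logConcave_Phi : ConcaveOn ℝ Set.univ (fun t => Real.log (Phi t)) := by
  apply concaveOn_univ_of_deriv2_nonpos
  · exact fun t => (hasDerivAt_logPhi t).differentiableAt
  · rw [deriv_logPhi]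
    exact fun t => (hasDerivAt_mills t).differentiableAt
  · intro t
    have : deriv^[2] (fun s => Real.log (Phi s)) t
        = (-t * phi t * Phi t - phi t * phi t) / Phi t ^ 2 := by
      rw [Function.iterate_succ, Function.iterate_one, Function.comp_apply, deriv_logPhi]
      exact (hasDerivAt_mills t).deriv
    rw [this]
    apply div_nonpos_of_nonpos_of_nonneg
    · have := mills_key t
      have := phi_pos t
      nlinarith
    · positivity
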